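/- Let n ≥ 1 and let F : ℝⁿ → ℝ be a Minkowski norm (continuous, F(y) > 0 for y ≠ 0, F(s·y) = s·F(y) for s ≥ 0, F² twice continuously differentiable on ℝⁿ∖{0}) whose fundamental form g_z(v,w) := (1/2)·D²(F²)(z)(v,w) is positive definite for each z ≠ 0. Define the dual norm F*(ξ) := sup_{y ≠ 0} ⟨ξ,y⟩/F(y) (identifying (ℝⁿ)* with ℝⁿ via the Euclidean inner product), assume F*² is twice continuously differentiable on ℝⁿ∖{0} with positive definite g*_η(ζ,ζ) := (1/2)·D²(F*²)(η)(ζ,ζ) for η ≠ 0, and suppose the uniformity constant Λ_F := sup_{X,Y,Z ≠ 0} g_X(Y,Y)/g_Z(Y,Y) is finite. Then the dual uniformity constant satisfies Λ_{F*} := sup_{ξ,η,ζ ≠ 0} g*_ξ(ζ,ζ)/g*_η(ζ,ζ) = Λ_F. -/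

import Mathlib

set_option linter.unusedSectionVars false
set_option linter.unusedVariables false
set_option maxHeartbeats 1000000

open scoped RealInnerProductSpace
open InnerProductSpace

variable {E : Type*} [NormedAddCommGroup E] [InnerProductSpace ℝ E] [FiniteDimensional ℝ E]

/-- Cauchy-Schwarz for a symmetric positive semidefinite operator. -/
lemma aux_cs (P : E →L[ℝ] E) (hsym : ∀ u v : E, ⟪P u, v⟫ = ⟪P v, u⟫)
    (hpsd : ∀ u : E, 0 ≤ ⟪P u, u⟫) (u v : E) :
    ⟪P u, v⟫ ^ 2 ≤ ⟪P u, u⟫ * ⟪P v, v⟫ := by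
  have key : ∀ t : ℝ, 0 ≤ ⟪P v, v⟫ * (t * t) + (2 * ⟪P u, v⟫) * t + ⟪P u, u⟫ := by
    intro t
    have h0 := hpsd (u + t • v)
    have e1 : ⟪P (u + t • v), u + t • v⟫
        = ⟪P u, u⟫ + t * ⟪P u, v⟫ + (t * ⟪P v, u⟫ + t * (t * ⟪P v, v⟫)) := by
      simp only [map_add, map_smul, inner_add_left, inner_add_right,
        real_inner_smul_left, real_inner_smul_right]
      ring
    rw [e1, hsym v u] at h0
    nlinarith [h0]
  have h := discrim_le_zero key
  rw [discrim] at h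
  nlinarith [h]

/-- Euler's identity for a 2-homogeneous function. -/
lemma aux_euler1 (f : E → ℝ) (hhom : ∀ s : ℝ, 0 ≤ s → ∀ y : E, f (s • y) = s ^ 2 * f y)
    {y : E} (hy : DifferentiableAt ℝ f y) : fderiv ℝ f y y = 2 * f y := by
  have hsm : HasDerivAt (fun t : ℝ => t • y) y 1 := by
    simpa using (hasDerivAt_id (1 : ℝ)).smul_const y
  have h1 : HasDerivAt (fun t : ℝ => f (t • y)) (fderiv ℝ f y y) 1 := by
    have hf : HasFDerivAt f (fderiv ℝ f y) ((1:ℝ) • y) := by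
      rw [one_smul]; exact hy.hasFDerivAt
    exact hf.comp_hasDerivAt (1 : ℝ) hsm
  have h2 : HasDerivAt (fun t : ℝ => t ^ 2 * f y) (2 * f y) 1 := by
    simpa using (hasDerivAt_pow 2 (1 : ℝ)).mul_const (f y)
  have heq : (fun t : ℝ => f (t • y)) =ᶠ[nhds 1] (fun t : ℝ => t ^ 2 * f y) := by
    filter_upwards [eventually_gt_nhds zero_lt_one] with t ht
    exact hhom t ht.le y
  have h2' : HasDerivAt (fun t : ℝ => f (t • y)) (2 * f y) 1 := h2.congr_of_eventuallyEq heq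
  exact h1.unique h2'

/-- The derivative of a 2-homogeneous function is 1-homogeneous. -/
lemma aux_fderiv_hom (f : E → ℝ) (hhom : ∀ s : ℝ, 0 ≤ s → ∀ y : E, f (s • y) = s ^ 2 * f y)
    (hdiff : ∀ y : E, y ≠ 0 → DifferentiableAt ℝ f y)
    {y : E} (hy : y ≠ 0) {s : ℝ} (hs : 0 < s) :
    fderiv ℝ f (s • y) = s • fderiv ℝ f y := by
  have hsy : s • y ≠ 0 := smul_ne_zero hs.ne' hy
  have hchain : HasFDerivAt (fun x : E => f (s • x))
      ((fderiv ℝ f (s • y)).comp (s • ContinuousLinearMap.id ℝ E)) y := by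
    have hlin : HasFDerivAt (fun x : E => s • x) (s • ContinuousLinearMap.id ℝ E) y := by
      exact (hasFDerivAt_id y).const_smul s
    exact ((hdiff _ hsy).hasFDerivAt).comp y hlin
  have hconst : HasFDerivAt (fun x : E => f (s • x)) (s ^ 2 • fderiv ℝ f y) y := by
    have : (fun x : E => f (s • x)) = fun x : E => s ^ 2 * f x := by
      funext x; exact hhom s hs.le x
    rw [this]
    exact ((hdiff _ hy).hasFDerivAt).const_smul (s ^ 2)
  have heq := hchain.unique hconst
  ext v
  have := congrArg (fun (L : E →L[ℝ] ℝ) => L v) heq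
  simp only [ContinuousLinearMap.comp_apply, ContinuousLinearMap.smul_apply,
    ContinuousLinearMap.id_apply] at this ⊢
  have hs' : (s : ℝ) ≠ 0 := hs.ne'
  have hl : fderiv ℝ f (s • y) (s • v) = s * fderiv ℝ f (s • y) v := by
    simp [map_smul]
  rw [hl] at this
  rw [smul_eq_mul]
  have := mul_left_cancel₀ hs' (by rw [this, smul_eq_mul]; ring : s * fderiv ℝ f (s • y) v = s * (s * fderiv ℝ f y v))
  linarith [this]

/-- Second Euler identity: `D²f(y)(y) = Df(y)` for 2-homogeneous `f`. -/
lemma aux_euler2 (f : E → ℝ) (hhom : ∀ s : ℝ, 0 ≤ s → ∀ y : E, f (s • y) = s ^ 2 * f y)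
    (hdiff : ∀ y : E, y ≠ 0 → DifferentiableAt ℝ f y)
    {y : E} (hy : y ≠ 0) (hdiff2 : DifferentiableAt ℝ (fderiv ℝ f) y) :
    fderiv ℝ (fderiv ℝ f) y y = fderiv ℝ f y := by
  have hsm : HasDerivAt (fun t : ℝ => t • y) y 1 := by
    simpa using (hasDerivAt_id (1 : ℝ)).smul_const y
  have h1 : HasDerivAt (fun t : ℝ => fderiv ℝ f (t • y)) (fderiv ℝ (fderiv ℝ f) y y) 1 := by
    have hf : HasFDerivAt (fderiv ℝ f) (fderiv ℝ (fderiv ℝ f) y) ((1:ℝ) • y) := by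
      rw [one_smul]; exact hdiff2.hasFDerivAt
    exact hf.comp_hasDerivAt (1 : ℝ) hsm
  have h2 : HasDerivAt (fun t : ℝ => t • fderiv ℝ f y) (fderiv ℝ f y) 1 := by
    simpa using (hasDerivAt_id (1 : ℝ)).smul_const (fderiv ℝ f y)
  have heq : (fun t : ℝ => fderiv ℝ f (t • y)) =ᶠ[nhds 1] (fun t : ℝ => t • fderiv ℝ f y) := by
    filter_upwards [eventually_gt_nhds zero_lt_one] with t ht
    exact aux_fderiv_hom f hhom hdiff hy ht
  exact h1.unique (h2.congr_of_eventuallyEq heq)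

/-- Subgradient inequality along a segment avoiding the origin, for a function with
positive semidefinite second derivative away from the origin. -/
lemma aux_subgrad (f : E → ℝ)
    (hdiff : ∀ y : E, y ≠ 0 → DifferentiableAt ℝ f y)
    (hdiff2 : ∀ y : E, y ≠ 0 → DifferentiableAt ℝ (fderiv ℝ f) y)
    (hpsd : ∀ z : E, z ≠ 0 → ∀ v : E, 0 ≤ fderiv ℝ (fderiv ℝ f) z v v)
    {y u : E} (hy : y ≠ 0)
    (hseg : ∀ t ∈ Set.Icc (0:ℝ) 1, y + t • (u - y) ≠ 0) :
    fderiv ℝ f y (u - y) ≤ f u - f y := by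
  set c : ℝ → E := fun t => y + t • (u - y) with hc
  set φ : ℝ → ℝ := fun t => fderiv ℝ f (c t) (u - y) with hφ
  have hcder : ∀ t : ℝ, HasDerivAt c (u - y) t := by
    intro t
    have := ((hasDerivAt_id t).smul_const (u - y)).const_add y; simp only [one_smul] at this; exact this
  -- derivative of h = f ∘ c
  have hhder : ∀ t : ℝ, c t ≠ 0 → HasDerivAt (fun s => f (c s)) (φ t) t := by
    intro t ht
    exact ((hdiff _ ht).hasFDerivAt).comp_hasDerivAt t (hcder t)
  -- derivative of φ
  have hφder : ∀ t : ℝ, c t ≠ 0 →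
      HasDerivAt φ (fderiv ℝ (fderiv ℝ f) (c t) (u - y) (u - y)) t := by
    intro t ht
    have h1 : HasDerivAt (fun s => fderiv ℝ f (c s)) (fderiv ℝ (fderiv ℝ f) (c t) (u - y)) t :=
      ((hdiff2 _ ht).hasFDerivAt).comp_hasDerivAt t (hcder t)
    have h2 := h1.clm_apply (hasDerivAt_const t (u - y))
    simpa only [map_zero, add_zero, zero_add] using h2
  have hmono : MonotoneOn φ (Set.Icc (0:ℝ) 1) := by
    apply monotoneOn_of_deriv_nonneg (convex_Icc 0 1)
    · exact fun t ht => ((hφder t (hseg t ht)).continuousAt).continuousWithinAt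
    · intro t ht
      rw [interior_Icc] at ht
      exact ((hφder t (hseg t ⟨ht.1.le, ht.2.le⟩)).differentiableAt).differentiableWithinAt
    · intro t ht
      rw [interior_Icc] at ht
      rw [(hφder t (hseg t ⟨ht.1.le, ht.2.le⟩)).deriv]
      exact hpsd _ (hseg t ⟨ht.1.le, ht.2.le⟩) (u - y)
  have hmvt : ∃ τ ∈ Set.Ioo (0:ℝ) 1, φ τ = (f (c 1) - f (c 0)) / (1 - 0) := by
    apply exists_hasDerivAt_eq_slope (fun s => f (c s)) φ zero_lt_one
    · exact fun t ht => ((hhder t (hseg t ht)).continuousAt).continuousWithinAt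
    · exact fun t ht => hhder t (hseg t ⟨ht.1.le, ht.2.le⟩)
  obtain ⟨τ, hτ, hτeq⟩ := hmvt
  have h0 : φ 0 ≤ φ τ :=
    hmono (Set.left_mem_Icc.mpr zero_le_one) ⟨hτ.1.le, hτ.2.le⟩ hτ.1.le
  have hc0 : c 0 = y := by simp [hc]
  have hc1 : c 1 = u := by simp [hc]
  have hφ0 : φ 0 = fderiv ℝ f y (u - y) := by rw [hφ]; simp [hc0]
  rw [hφ0] at h0
  rw [hc0, hc1] at hτeq
  simp only [sub_zero, div_one] at hτeq
  linarith [h0, hτeq.le, hτeq.ge]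
/-- The fundamental inequality of Minkowski norms. -/
lemma aux_fund (F : E → ℝ) (f : E → ℝ) (hf : ∀ x, f x = F x ^ 2)
    (hFpos : ∀ y : E, y ≠ 0 → 0 < F y)
    (hFhom : ∀ s : ℝ, 0 ≤ s → ∀ y : E, F (s • y) = s * F y)
    (hdiff : ∀ y : E, y ≠ 0 → DifferentiableAt ℝ f y)
    (hdiff2 : ∀ y : E, y ≠ 0 → DifferentiableAt ℝ (fderiv ℝ f) y)
    (hpsd : ∀ z : E, z ≠ 0 → ∀ v : E, 0 ≤ fderiv ℝ (fderiv ℝ f) z v v)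
    {y : E} (hy : y ≠ 0) (u : E) :
    (1/2) * fderiv ℝ f y u ≤ F y * F u := by
  have hhom : ∀ s : ℝ, 0 ≤ s → ∀ x : E, f (s • x) = s ^ 2 * f x := by
    intro s hs x; rw [hf, hf, hFhom s hs x]; ring
  rcases eq_or_ne u 0 with rfl | hu
  · have hF0 : F (0:E) = 0 := by
      have := hFhom 0 le_rfl 0
      simpa using this
    simp [hF0]
  · -- scale u to have the same F-value as y
    set s₀ : ℝ := F y / F u with hs₀def
    have hFy := hFpos y hy
    have hFu := hFpos u hu
    have hs₀ : 0 < s₀ := div_pos hFy hFu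
    set u' : E := s₀ • u with hu'def
    have hu'ne : u' ≠ 0 := smul_ne_zero hs₀.ne' hu
    have hFu' : F u' = F y := by
      rw [hu'def, hFhom s₀ hs₀.le, hs₀def]
      field_simp
    have hfu' : f u' = f y := by rw [hf, hf, hFu']
    have key : fderiv ℝ f y u' ≤ 2 * f y := by
      by_cases hseg : ∀ t ∈ Set.Icc (0:ℝ) 1, y + t • (u' - y) ≠ 0
      · have hsub := aux_subgrad f hdiff hdiff2 hpsd hy hseg
        rw [map_sub, hfu'] at hsub
        have he := aux_euler1 f hhom (hdiff y hy)
        linarith [hsub, he.le, he.ge]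
      · push_neg at hseg
        obtain ⟨t, ht, hteq⟩ := hseg
        have ht0 : t ≠ 0 := by
          intro h; rw [h] at hteq; simp at hteq; exact hy hteq
        have hu'eq : u' = (t⁻¹ * (-(1 - t))) • y := by
          have h1 : t • u' = (-(1 - t)) • y := by
            have : y + t • (u' - y) = 0 := hteq
            rw [smul_sub] at this
            have h2 : t • u' = t • y - y := by
              have := this
              abel_nf at this ⊢
              linear_combination (norm := module) this
            rw [h2]
            module
          calc u' = t⁻¹ • (t • u') := by rw [smul_smul, inv_mul_cancel₀ ht0, one_smul]
          _ = t⁻¹ • ((-(1 - t)) • y) := by rw [h1]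
          _ = (t⁻¹ * (-(1 - t))) • y := by rw [smul_smul]
        have ht1 : 0 ≤ 1 - t := by linarith [ht.2]
        have htpos : 0 < t := lt_of_le_of_ne ht.1 (Ne.symm ht0)
        have hcoef : t⁻¹ * (-(1 - t)) ≤ 0 := by
          apply mul_nonpos_of_nonneg_of_nonpos
          · positivity
          · linarith
        have he := aux_euler1 f hhom (hdiff y hy)
        have hfy : 0 < f y := by rw [hf]; positivity
        calc fderiv ℝ f y u' = (t⁻¹ * (-(1 - t))) * fderiv ℝ f y y := by
              rw [hu'eq, map_smul]; rfl
        _ = (t⁻¹ * (-(1 - t))) * (2 * f y) := by rw [he]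
        _ ≤ 0 := mul_nonpos_of_nonpos_of_nonneg hcoef (by linarith)
        _ ≤ 2 * f y := by linarith
    -- now rescale back
    have hueq : u = s₀⁻¹ • u' := by
      rw [hu'def, smul_smul, inv_mul_cancel₀ hs₀.ne', one_smul]
    have : fderiv ℝ f y u = s₀⁻¹ * fderiv ℝ f y u' := by
      rw [hueq, map_smul]; rfl
    rw [this]
    have hfy : f y = F y ^ 2 := hf y
    have hs₀inv : s₀⁻¹ = F u / F y := by rw [hs₀def]; field_simp
    calc (1/2) * (s₀⁻¹ * fderiv ℝ f y u') ≤ (1/2) * (s₀⁻¹ * (2 * f y)) := by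
          apply mul_le_mul_of_nonneg_left _ (by norm_num)
          apply mul_le_mul_of_nonneg_left key (by positivity)
    _ = F y * F u := by rw [hfy, hs₀inv]; field_simp

/-- The Legendre transform hits every nonzero covector. -/
lemma aux_surj [Nontrivial E] (F : E → ℝ) (f : E → ℝ) (hf : ∀ x, f x = F x ^ 2)
    (hFpos : ∀ y : E, y ≠ 0 → 0 < F y)
    (hFhom : ∀ s : ℝ, 0 ≤ s → ∀ y : E, F (s • y) = s * F y)
    (hFcont : Continuous F)
    (hdiff : ∀ y : E, y ≠ 0 → DifferentiableAt ℝ f y)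
    {ξ : E} (hξ : ξ ≠ 0) :
    ∃ y : E, y ≠ 0 ∧ (toDual ℝ E).symm ((1/2 : ℝ) • fderiv ℝ f y) = ξ := by
  have hF0 : F (0:E) = 0 := by simpa using hFhom 0 le_rfl 0
  -- lower bound for F
  obtain ⟨x₀, hx₀mem, hx₀min⟩ := (isCompact_sphere (0:E) 1).exists_isMinOn
    ((NormedSpace.sphere_nonempty (x := (0:E))).mpr zero_le_one) hFcont.continuousOn
  set c : ℝ := F x₀ with hcdef
  have hx₀ne : x₀ ≠ 0 := by
    intro h
    rw [mem_sphere_iff_norm, h] at hx₀mem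
    simp at hx₀mem
  have hc : 0 < c := hFpos x₀ hx₀ne
  have hlow : ∀ x : E, c * ‖x‖ ≤ F x := by
    intro x
    rcases eq_or_ne x 0 with rfl | hx
    · simp [hF0]
    · have hxn : (0:ℝ) < ‖x‖ := norm_pos_iff.mpr hx
      have hunit : ‖x‖⁻¹ • x ∈ Metric.sphere (0:E) 1 := by
        rw [mem_sphere_iff_norm, sub_zero, norm_smul]
        simp [abs_of_pos (inv_pos.mpr hxn), inv_mul_cancel₀ hxn.ne']
      have h1 : c ≤ F (‖x‖⁻¹ • x) := hx₀min hunit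
      have h2 : F x = ‖x‖ * F (‖x‖⁻¹ • x) := by
        conv_lhs => rw [show x = ‖x‖ • (‖x‖⁻¹ • x) by rw [smul_smul, mul_inv_cancel₀ hxn.ne', one_smul]]
        exact hFhom _ (norm_nonneg x) _
      rw [h2]
      calc c * ‖x‖ = ‖x‖ * c := by ring
      _ ≤ ‖x‖ * F (‖x‖⁻¹ • x) := by
          exact mul_le_mul_of_nonneg_left h1 (norm_nonneg x)
  -- the function to maximize
  set φ : E → ℝ := fun x => ⟪ξ, x⟫ - (1/2) * f x with hφdef
  have hφcont : Continuous φ := by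
    have : Continuous fun x : E => f x := by
      have : (fun x : E => f x) = fun x => F x ^ 2 := funext hf
      rw [this]; exact hFcont.pow 2
    exact (continuous_const.inner continuous_id).sub (continuous_const.mul this)
  -- a point with positive value
  have hfξ : 0 < f ξ := by rw [hf]; exact pow_pos (hFpos ξ hξ) 2
  set ε : ℝ := ‖ξ‖ ^ 2 / f ξ with hεdef
  have hε : 0 < ε := div_pos (pow_pos (norm_pos_iff.mpr hξ) 2) hfξ
  set w : E := ε • ξ with hwdef
  have hφw : 0 < φ w := by
    have h1 : ⟪ξ, w⟫ = ε * ‖ξ‖ ^ 2 := by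
      rw [hwdef, real_inner_smul_right, real_inner_self_eq_norm_sq]
    have h2 : f w = ε ^ 2 * f ξ := by
      rw [hwdef, hf, hf, hFhom ε hε.le]; ring
    have h3 : ε * f ξ = ‖ξ‖ ^ 2 := by
      rw [hεdef]; field_simp
    simp only [hφdef, h1, h2]
    have : ε ^ 2 * f ξ = ε * ‖ξ‖ ^ 2 := by rw [pow_two, mul_assoc, h3]
    rw [this]
    have hn : 0 < ‖ξ‖ ^ 2 := pow_pos (norm_pos_iff.mpr hξ) 2
    nlinarith
  set R : ℝ := max (2 * ‖ξ‖ / c ^ 2 + 1) ‖w‖ with hRdef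
  have hout : ∀ x : E, R ≤ ‖x‖ → φ x ≤ 0 := by
    intro x hx
    have h1 : ⟪ξ, x⟫ ≤ ‖ξ‖ * ‖x‖ := real_inner_le_norm ξ x
    have h2 : (c * ‖x‖) ^ 2 ≤ f x := by
      rw [hf]
      exact pow_le_pow_left₀ (by positivity) (hlow x) 2
    have hx1 : 2 * ‖ξ‖ / c ^ 2 + 1 ≤ ‖x‖ := le_trans (le_max_left _ _) hx
    have hc2 : (0:ℝ) < c ^ 2 := pow_pos hc 2
    have hcx : 2 * ‖ξ‖ + c ^ 2 ≤ c ^ 2 * ‖x‖ := by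
      have h := mul_le_mul_of_nonneg_left hx1 hc2.le
      have he : c ^ 2 * (2 * ‖ξ‖ / c ^ 2 + 1) = 2 * ‖ξ‖ + c ^ 2 := by
        field_simp
      linarith
    have hP := mul_le_mul_of_nonneg_right hcx (norm_nonneg x)
    simp only [hφdef]
    nlinarith [h1, h2, hP, norm_nonneg x, norm_nonneg ξ]
  -- maximize over a closed ball
  have hwmem : w ∈ Metric.closedBall (0:E) R := by
    rw [Metric.mem_closedBall, dist_zero_right]
    exact le_max_right _ _
  obtain ⟨z, hzmem, hzmax⟩ := (isCompact_closedBall (0:E) R).exists_isMaxOn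
    ⟨w, hwmem⟩ hφcont.continuousOn
  have hzw : φ w ≤ φ z := hzmax hwmem
  have hglob : ∀ x : E, φ x ≤ φ z := by
    intro x
    by_cases hx : ‖x‖ ≤ R
    · exact hzmax (by rwa [Metric.mem_closedBall, dist_zero_right])
    · push_neg at hx
      have := hout x hx.le
      linarith
  have hzne : z ≠ 0 := by
    intro h
    have hφ0 : φ (0:E) = 0 := by
      simp only [hφdef, inner_zero_right, hf]
      simp [hF0]
    have := hglob w
    rw [h] at hzw
    rw [hφ0] at hzw
    linarith
  have hlocmax : IsLocalMax φ z := Filter.Eventually.of_forall hglob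
  have hd : HasFDerivAt φ ((innerSL ℝ ξ : E →L[ℝ] ℝ) - ((1/2 : ℝ) • fderiv ℝ f z)) z := by
    have h1 : HasFDerivAt (fun x : E => ⟪ξ, x⟫) (innerSL ℝ ξ : E →L[ℝ] ℝ) z :=
      (innerSL ℝ ξ).hasFDerivAt
    have h2 : HasFDerivAt (fun x : E => (1/2 : ℝ) * f x) ((1/2 : ℝ) • fderiv ℝ f z) z :=
      ((hdiff z hzne).hasFDerivAt).const_mul (1/2)
    exact h1.sub h2
  have hzero : (innerSL ℝ ξ : E →L[ℝ] ℝ) - ((1/2 : ℝ) • fderiv ℝ f z) = 0 := by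
    rw [← hd.fderiv]
    exact hlocmax.fderiv_eq_zero
  refine ⟨z, hzne, ?_⟩
  apply ext_inner_right (𝕜 := ℝ)
  intro v
  rw [toDual_symm_apply]
  have := congrArg (fun (L : E →L[ℝ] ℝ) => L v) hzero
  simp only [ContinuousLinearMap.sub_apply, ContinuousLinearMap.smul_apply,
    ContinuousLinearMap.zero_apply, innerSL_apply_apply] at this
  have h3 : ((1/2 : ℝ) • fderiv ℝ f z) v = (1/2 : ℝ) * fderiv ℝ f z v := rfl
  rw [h3]
  rw [smul_eq_mul] at this
  linarith [this]

/-- value of the dual norm at the Legendre image. -/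
lemma aux_dualval (F f : E → ℝ) (hf : ∀ x, f x = F x ^ 2)
    (hFpos : ∀ u : E, u ≠ 0 → 0 < F u)
    {y : E} (hy : y ≠ 0)
    (hfund : ∀ u : E, (1/2) * fderiv ℝ f y u ≤ F y * F u)
    (heuler : fderiv ℝ f y y = 2 * f y) :
    (⨆ u : {u : E // u ≠ 0},
      ⟪(toDual ℝ E).symm ((1/2 : ℝ) • fderiv ℝ f y), (u : E)⟫ / F u) = F y := by
  set η : E := (toDual ℝ E).symm ((1/2 : ℝ) • fderiv ℝ f y) with hηdef
  have hη : ∀ v : E, ⟪η, v⟫ = (1/2) * fderiv ℝ f y v := by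
    intro v
    rw [hηdef, toDual_symm_apply]
    rfl
  haveI : Nonempty {u : E // u ≠ 0} := ⟨⟨y, hy⟩⟩
  have hble : ∀ u : {u : E // u ≠ 0}, ⟪η, (u : E)⟫ / F u ≤ F y := by
    rintro ⟨u, hu⟩
    rw [hη]
    rw [div_le_iff₀ (hFpos u hu)]
    exact hfund u
  apply le_antisymm
  · exact ciSup_le hble
  · have hb : BddAbove (Set.range fun u : {u : E // u ≠ 0} => ⟪η, (u : E)⟫ / F u) := by
      refine ⟨F y, ?_⟩
      rintro r ⟨u, rfl⟩
      exact hble u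
    have hval : ⟪η, y⟫ / F y = F y := by
      rw [hη, heuler, hf]
      have := hFpos y hy
      field_simp
    calc F y = ⟪η, y⟫ / F y := hval.symm
    _ ≤ _ := le_ciSup hb ⟨y, hy⟩
theorem aux_main [Nontrivial E]
    (F : E → ℝ)
    (hFcont : Continuous F)
    (hFpos : ∀ y : E, y ≠ 0 → 0 < F y)
    (hFhom : ∀ s : ℝ, 0 ≤ s → ∀ y : E, F (s • y) = s * F y)
    (hFsmooth : ContDiffOn ℝ 2 (fun y => (F y) ^ 2) {(0 : E)}ᶜ)
    (g : E → E → E → ℝ)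
    (hg : ∀ z, z ≠ 0 → ∀ v w : E,
      g z v w = (1 / 2) * fderiv ℝ (fun y => fderiv ℝ (fun y' => (F y') ^ 2) y v) z w)
    (hgpos : ∀ z, z ≠ 0 → ∀ v : E, v ≠ 0 → 0 < g z v v)
    (Fs : E → ℝ)
    (hFs : ∀ ξ : E, Fs ξ = ⨆ y : {y : E // y ≠ 0}, ⟪ξ, (y : E)⟫ / F y)
    (hFssmooth : ContDiffOn ℝ 2 (fun ξ => (Fs ξ) ^ 2) {(0 : E)}ᶜ)
    (gs : E → E → E → ℝ)
    (hgs : ∀ η, η ≠ 0 → ∀ v w : E,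
      gs η v w = (1 / 2) * fderiv ℝ (fun ξ => fderiv ℝ (fun ξ' => (Fs ξ') ^ 2) ξ v) η w)
    (hgspos : ∀ η, η ≠ 0 → ∀ ζ : E, ζ ≠ 0 → 0 < gs η ζ ζ)
    (hbdd : BddAbove {r : ℝ | ∃ X Y Z : E,
      X ≠ 0 ∧ Y ≠ 0 ∧ Z ≠ 0 ∧ r = g X Y Y / g Z Y Y}) :
    sSup {r : ℝ | ∃ ξ η ζ : E,
        ξ ≠ 0 ∧ η ≠ 0 ∧ ζ ≠ 0 ∧ r = gs ξ ζ ζ / gs η ζ ζ} =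
      sSup {r : ℝ | ∃ X Y Z : E,
        X ≠ 0 ∧ Y ≠ 0 ∧ Z ≠ 0 ∧ r = g X Y Y / g Z Y Y} := by
  classical
  set f : E → ℝ := fun y => F y ^ 2 with hfdef
  set fs : E → ℝ := fun ξ => Fs ξ ^ 2 with hfsdef
  have hopen : IsOpen ({(0 : E)}ᶜ) := isOpen_compl_singleton
  -- basic differentiability facts for f
  have hfC2 : ∀ y : E, y ≠ 0 → ContDiffAt ℝ 2 f y := fun y hy =>
    hFsmooth.contDiffAt (hopen.mem_nhds hy)
  have hfd : ∀ y : E, y ≠ 0 → DifferentiableAt ℝ f y := fun y hy =>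
    (hfC2 y hy).differentiableAt two_ne_zero
  have hfd2 : ∀ y : E, y ≠ 0 → DifferentiableAt ℝ (fderiv ℝ f) y := fun y hy =>
    ((hfC2 y hy).fderiv_right (m := 1) (by norm_num)).differentiableAt one_ne_zero
  have hsymm : ∀ z : E, z ≠ 0 → ∀ v w : E,
      fderiv ℝ (fderiv ℝ f) z v w = fderiv ℝ (fderiv ℝ f) z w v := fun z hz =>
    (hfC2 z hz).isSymmSndFDerivAt (by simp)
  -- same for fs
  have hfsC2 : ∀ y : E, y ≠ 0 → ContDiffAt ℝ 2 fs y := fun y hy =>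
    hFssmooth.contDiffAt (hopen.mem_nhds hy)
  have hfsd : ∀ y : E, y ≠ 0 → DifferentiableAt ℝ fs y := fun y hy =>
    (hfsC2 y hy).differentiableAt two_ne_zero
  have hfsd2 : ∀ y : E, y ≠ 0 → DifferentiableAt ℝ (fderiv ℝ fs) y := fun y hy =>
    ((hfsC2 y hy).fderiv_right (m := 1) (by norm_num)).differentiableAt one_ne_zero
  have hsymms : ∀ z : E, z ≠ 0 → ∀ v w : E,
      fderiv ℝ (fderiv ℝ fs) z v w = fderiv ℝ (fderiv ℝ fs) z w v := fun z hz =>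
    (hfsC2 z hz).isSymmSndFDerivAt (by simp)
  -- g in terms of the second derivative
  have hgD2 : ∀ z, z ≠ 0 → ∀ v w : E, g z v w = (1/2) * fderiv ℝ (fderiv ℝ f) z w v := by
    intro z hz v w
    rw [hg z hz v w]
    have h := fderiv_clm_apply (c := fderiv ℝ f) (u := fun _ => v)
      (hfd2 z hz) (differentiableAt_const v)
    have h2 : (fun y => fderiv ℝ f y v) = fun y => (fderiv ℝ f y) v := rfl
    rw [show (fun y => fderiv ℝ (fun y' => F y' ^ 2) y v) = fun y => (fderiv ℝ f y) v from rfl]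
    rw [h]
    simp
  have hgsD2 : ∀ z, z ≠ 0 → ∀ v w : E, gs z v w = (1/2) * fderiv ℝ (fderiv ℝ fs) z w v := by
    intro z hz v w
    rw [hgs z hz v w]
    have h := fderiv_clm_apply (c := fderiv ℝ fs) (u := fun _ => v)
      (hfsd2 z hz) (differentiableAt_const v)
    rw [show (fun y => fderiv ℝ (fun y' => Fs y' ^ 2) y v) = fun y => (fderiv ℝ fs y) v from rfl]
    rw [h]
    simp
  have hD2g : ∀ z, z ≠ 0 → ∀ v : E, fderiv ℝ (fderiv ℝ f) z v v = 2 * g z v v := by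
    intro z hz v; rw [hgD2 z hz v v]; ring
  have hD2psd : ∀ z : E, z ≠ 0 → ∀ v : E, 0 ≤ fderiv ℝ (fderiv ℝ f) z v v := by
    intro z hz v
    rcases eq_or_ne v 0 with rfl | hv
    · simp
    · rw [hD2g z hz v]; linarith [hgpos z hz v hv]
  -- homogeneity of f
  have hfhom : ∀ s : ℝ, 0 ≤ s → ∀ y : E, f (s • y) = s ^ 2 * f y := by
    intro s hs y
    simp only [hfdef]
    rw [hFhom s hs y]; ring
  have heuler1 : ∀ y : E, y ≠ 0 → fderiv ℝ f y y = 2 * f y := fun y hy =>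
    aux_euler1 f hfhom (hfd y hy)
  have heuler2 : ∀ y : E, y ≠ 0 → fderiv ℝ (fderiv ℝ f) y y = fderiv ℝ f y := fun y hy =>
    aux_euler2 f hfhom hfd hy (hfd2 y hy)
  have hfund : ∀ y : E, y ≠ 0 → ∀ u : E, (1/2) * fderiv ℝ f y u ≤ F y * F u := fun y hy =>
    aux_fund F f (fun _ => rfl) hFpos hFhom hfd hfd2 hD2psd hy
  -- the Riesz identification as a genuinely ℝ-linear continuous map
  set ψ : StrongDual ℝ E →L[ℝ] E := LinearMap.toContinuousLinearMap
    { toFun := fun φ => (toDual ℝ E).symm φ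
      map_add' := fun φ₁ φ₂ => by simp
      map_smul' := fun r φ => by simp } with hψdef
  have hψ : ∀ (φ : StrongDual ℝ E) (x : E), ⟪ψ φ, x⟫ = φ x := fun φ x =>
    toDual_symm_apply
  -- the Legendre map
  set ℓ : E → E := fun y => ψ ((1/2 : ℝ) • fderiv ℝ f y) with hℓdef
  have hℓeq : ∀ y : E, ℓ y = (toDual ℝ E).symm ((1/2 : ℝ) • fderiv ℝ f y) := fun y => rfl
  have hℓinner : ∀ y v : E, ⟪ℓ y, v⟫ = (1/2) * fderiv ℝ f y v := by
    intro y v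
    simp only [hℓdef]
    rw [hψ]
    rfl
  have hFsℓ : ∀ y : E, y ≠ 0 → Fs (ℓ y) = F y := by
    intro y hy
    rw [hFs (ℓ y)]
    exact aux_dualval F f (fun _ => rfl) hFpos hy (hfund y hy) (heuler1 y hy)
  have hℓne : ∀ y : E, y ≠ 0 → ℓ y ≠ 0 := by
    intro y hy h
    have h1 := hℓinner y y
    rw [h, inner_zero_left, heuler1 y hy] at h1
    have h2 : 0 < f y := by simp only [hfdef]; exact pow_pos (hFpos y hy) 2
    linarith [h1]
  have hcomp : ∀ z : E, z ≠ 0 → fs (ℓ z) = f z := by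
    intro z hz
    simp only [hfsdef, hfdef]
    rw [hFsℓ z hz]
  -- the dual Legendre map
  set ℓs : E → E := fun η => ψ ((1/2 : ℝ) • fderiv ℝ fs η) with hℓsdef
  have hℓsinner : ∀ y v : E, ⟪ℓs y, v⟫ = (1/2) * fderiv ℝ fs y v := by
    intro y v
    simp only [hℓsdef]
    rw [hψ]
    rfl
  -- the operator versions of the second derivatives
  set T : E → E →L[ℝ] E := fun z => ψ.comp ((1/2 : ℝ) • fderiv ℝ (fderiv ℝ f) z) with hTdef
  set Ts : E → E →L[ℝ] E := fun z => ψ.comp ((1/2 : ℝ) • fderiv ℝ (fderiv ℝ fs) z) with hTsdef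
  have hTinner : ∀ z v w : E, ⟪T z v, w⟫ = (1/2) * fderiv ℝ (fderiv ℝ f) z v w := by
    intro z v w
    simp only [hTdef, ContinuousLinearMap.comp_apply]
    rw [hψ]
    rfl
  have hTsinner : ∀ z v w : E, ⟪Ts z v, w⟫ = (1/2) * fderiv ℝ (fderiv ℝ fs) z v w := by
    intro z v w
    simp only [hTsdef, ContinuousLinearMap.comp_apply]
    rw [hψ]
    rfl
  have hℓder : ∀ z : E, z ≠ 0 → HasFDerivAt ℓ (T z) z := by
    intro z hz
    exact ψ.hasFDerivAt.comp z (((hfd2 z hz).hasFDerivAt).const_smul (1/2 : ℝ))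
  have hℓsder : ∀ z : E, z ≠ 0 → HasFDerivAt ℓs (Ts z) z := by
    intro z hz
    exact ψ.hasFDerivAt.comp z (((hfsd2 z hz).hasFDerivAt).const_smul (1/2 : ℝ))
  -- symmetry and positivity of the operators
  have hTsymm : ∀ z : E, z ≠ 0 → ∀ v w : E, ⟪T z v, w⟫ = ⟪T z w, v⟫ := by
    intro z hz v w
    rw [hTinner, hTinner, hsymm z hz v w]
  have hTssymm : ∀ z : E, z ≠ 0 → ∀ v w : E, ⟪Ts z v, w⟫ = ⟪Ts z w, v⟫ := by
    intro z hz v w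
    rw [hTsinner, hTsinner, hsymms z hz v w]
  have hgT : ∀ z : E, z ≠ 0 → ∀ v : E, g z v v = ⟪T z v, v⟫ := by
    intro z hz v
    rw [hTinner, hgD2 z hz v v]
  have hgsTs : ∀ z : E, z ≠ 0 → ∀ v : E, gs z v v = ⟪Ts z v, v⟫ := by
    intro z hz v
    rw [hTsinner, hgsD2 z hz v v]
  have hTpos : ∀ z : E, z ≠ 0 → ∀ v : E, v ≠ 0 → 0 < ⟪T z v, v⟫ := by
    intro z hz v hv
    rw [← hgT z hz v]
    exact hgpos z hz v hv
  have hTspos : ∀ z : E, z ≠ 0 → ∀ v : E, v ≠ 0 → 0 < ⟪Ts z v, v⟫ := by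
    intro z hz v hv
    rw [← hgsTs z hz v]
    exact hgspos z hz v hv
  have hTpsd : ∀ z : E, z ≠ 0 → ∀ v : E, 0 ≤ ⟪T z v, v⟫ := by
    intro z hz v
    rcases eq_or_ne v 0 with rfl | hv
    · simp
    · exact (hTpos z hz v hv).le
  have hTspsd : ∀ z : E, z ≠ 0 → ∀ v : E, 0 ≤ ⟪Ts z v, v⟫ := by
    intro z hz v
    rcases eq_or_ne v 0 with rfl | hv
    · simp
    · exact (hTspos z hz v hv).le
  have hTinj : ∀ z : E, z ≠ 0 → Function.Injective (T z) := by
    intro z hz a b hab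
    by_contra hne
    have h1 : a - b ≠ 0 := sub_ne_zero.mpr hne
    have h2 := hTpos z hz (a - b) h1
    rw [map_sub, hab, sub_self] at h2
    simp at h2
  have hTsurj : ∀ z : E, z ≠ 0 → Function.Surjective (T z) := by
    intro z hz
    have := (LinearMap.injective_iff_surjective (f := (T z : E →ₗ[ℝ] E))).mp (hTinj z hz)
    exact this
  -- the Legendre transform is surjective onto nonzero vectors
  have hsurj : ∀ ξ : E, ξ ≠ 0 → ∃ X : E, X ≠ 0 ∧ ℓ X = ξ := by
    intro ξ hξ
    obtain ⟨y, hy, hyeq⟩ := aux_surj F f (fun _ => rfl) hFpos hFhom hFcont hfd hξ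
    exact ⟨y, hy, hyeq⟩
  -- the inverse Legendre identity : ℓs ∘ ℓ = id away from 0
  have hinv : ∀ y : E, y ≠ 0 → ℓs (ℓ y) = y := by
    intro y hy
    -- differentiate fs ∘ ℓ = f
    have h1 : HasFDerivAt (fs ∘ ℓ) ((fderiv ℝ fs (ℓ y)).comp (T y)) y :=
      ((hfsd (ℓ y) (hℓne y hy)).hasFDerivAt).comp y (hℓder y hy)
    have h2 : (fs ∘ ℓ) =ᶠ[nhds y] f := by
      filter_upwards [hopen.mem_nhds hy] with z hz
      exact hcomp z hz
    have h3 : HasFDerivAt f ((fderiv ℝ fs (ℓ y)).comp (T y)) y :=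
      h1.congr_of_eventuallyEq h2.symm
    have h4 : (fderiv ℝ fs (ℓ y)).comp (T y) = fderiv ℝ f y :=
      ((hfd y hy).hasFDerivAt.unique h3).symm
    have h5 : ∀ v : E, fderiv ℝ fs (ℓ y) (T y v) = fderiv ℝ f y v := by
      intro v
      have := congrArg (fun (L : E →L[ℝ] ℝ) => L v) h4
      simpa using this
    -- hence ⟪ℓs (ℓ y) - y, T y v⟫ = 0 for all v
    have h6 : ∀ v : E, ⟪ℓs (ℓ y) - y, T y v⟫ = 0 := by
      intro v
      rw [inner_sub_left]
      have ha : ⟪ℓs (ℓ y), T y v⟫ = (1/2) * fderiv ℝ f y v := by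
        rw [hℓsinner, h5 v]
      have hb : ⟪y, T y v⟫ = (1/2) * fderiv ℝ f y v := by
        rw [real_inner_comm, hTinner, hsymm y hy v y, heuler2 y hy]
      rw [ha, hb]
      ring
    obtain ⟨v, hv⟩ := hTsurj y hy (ℓs (ℓ y) - y)
    have := h6 v
    rw [hv, real_inner_self_eq_norm_sq] at this
    have hnorm : ‖ℓs (ℓ y) - y‖ = 0 := by
      nlinarith [norm_nonneg (ℓs (ℓ y) - y)]
    rw [norm_eq_zero, sub_eq_zero] at hnorm
    exact hnorm
  -- differentiating ℓs ∘ ℓ = id : Ts (ℓ y) is a left (hence two-sided) inverse of T y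
  have hleft : ∀ y : E, y ≠ 0 → ∀ v : E, Ts (ℓ y) (T y v) = v := by
    intro y hy
    have h1 : HasFDerivAt (ℓs ∘ ℓ) ((Ts (ℓ y)).comp (T y)) y :=
      (hℓsder (ℓ y) (hℓne y hy)).comp y (hℓder y hy)
    have h2 : (ℓs ∘ ℓ) =ᶠ[nhds y] id := by
      filter_upwards [hopen.mem_nhds hy] with z hz
      exact hinv z hz
    have h3 : HasFDerivAt (id : E → E) ((Ts (ℓ y)).comp (T y)) y :=
      h1.congr_of_eventuallyEq h2.symm
    have h4 : (Ts (ℓ y)).comp (T y) = ContinuousLinearMap.id ℝ E :=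
      h3.unique (hasFDerivAt_id y)
    intro v
    have := congrArg (fun (L : E →L[ℝ] E) => L v) h4
    simpa using this
  have hright : ∀ y : E, y ≠ 0 → ∀ w : E, T y (Ts (ℓ y) w) = w := by
    intro y hy w
    obtain ⟨v, hv⟩ := hTsurj y hy w
    rw [← hv, hleft y hy v]
  -- the two ratio sets
  set S : Set ℝ := {r : ℝ | ∃ X Y Z : E, X ≠ 0 ∧ Y ≠ 0 ∧ Z ≠ 0 ∧ r = g X Y Y / g Z Y Y}
    with hSdef
  set Sstar : Set ℝ := {r : ℝ | ∃ ξ η ζ : E, ξ ≠ 0 ∧ η ≠ 0 ∧ ζ ≠ 0 ∧ r = gs ξ ζ ζ / gs η ζ ζ}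
    with hSstardef
  -- every dual ratio is bounded by some primal ratio
  have hA : ∀ r ∈ Sstar, r ≤ sSup S := by
    rintro r ⟨ξ, η, ζ, hξ, hη, hζ, rfl⟩
    obtain ⟨X, hX, hℓX⟩ := hsurj ξ hξ
    obtain ⟨Z, hZ, hℓZ⟩ := hsurj η hη
    set Y : E := Ts ξ ζ with hYdef
    have hTXY : T X Y = ζ := by
      rw [hYdef, ← hℓX]
      exact hright X hX ζ
    have hYne : Y ≠ 0 := by
      intro h
      apply hζ
      rw [← hTXY, h, map_zero]
    have hTZeta : T Z (Ts η ζ) = ζ := by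
      rw [← hℓZ]
      exact hright Z hZ ζ
    have ha : gs ξ ζ ζ = ⟪ζ, Y⟫ := by
      rw [hgsTs ξ hξ ζ, real_inner_comm]
    have hdpos : 0 < gs η ζ ζ := hgspos η hη ζ hζ
    have hgXval : g X Y Y = ⟪ζ, Y⟫ := by
      rw [hgT X hX Y, hTXY]
    have hbval : gs η ζ ζ = ⟪Ts η ζ, ζ⟫ := hgsTs η hη ζ
    have hcs := aux_cs (T Z) (hTsymm Z hZ) (hTpsd Z hZ) Y (Ts η ζ)
    have hx1 : ⟪T Z Y, Ts η ζ⟫ = ⟪ζ, Y⟫ := by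
      rw [hTsymm Z hZ Y (Ts η ζ), hTZeta]
    have hx2 : ⟪T Z (Ts η ζ), Ts η ζ⟫ = ⟪Ts η ζ, ζ⟫ := by
      rw [hTZeta]
      exact real_inner_comm (Ts η ζ) ζ
    rw [hx1, hx2] at hcs
    have hXposval : 0 < ⟪ζ, Y⟫ := by
      rw [← ha]
      exact hgspos ξ hξ ζ hζ
    have hstep : gs ξ ζ ζ / gs η ζ ζ ≤ g Z Y Y / g X Y Y := by
      rw [ha, hbval, hgXval, hgT Z hZ Y]
      rw [div_le_div_iff₀ (by rw [← hbval]; exact hdpos) hXposval]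
      nlinarith [hcs]
    exact le_trans hstep (le_csSup hbdd ⟨Z, Y, X, hZ, hYne, hX, rfl⟩)
  have hbddstar : BddAbove Sstar := ⟨sSup S, fun r hr => hA r hr⟩
  -- every primal ratio is bounded by some dual ratio
  have hB : ∀ r ∈ S, r ≤ sSup Sstar := by
    rintro r ⟨X, Y, Z, hX, hY, hZ, rfl⟩
    have hξ : ℓ X ≠ 0 := hℓne X hX
    have hη : ℓ Z ≠ 0 := hℓne Z hZ
    set ζ : E := T X Y with hζdef
    have hζ : ζ ≠ 0 := by
      intro h
      apply hY
      apply hTinj X hX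
      rw [← hζdef, h, map_zero]
    have hTsξζ : Ts (ℓ X) ζ = Y := hleft X hX Y
    have hTsW : Ts (ℓ Z) (T Z Y) = Y := hleft Z hZ Y
    have hgXval : g X Y Y = ⟪ζ, Y⟫ := hgT X hX Y
    have hgZval : g Z Y Y = ⟪T Z Y, Y⟫ := hgT Z hZ Y
    have hgsξval : gs (ℓ X) ζ ζ = ⟪ζ, Y⟫ := by
      rw [hgsTs (ℓ X) hξ ζ, hTsξζ, real_inner_comm]
    have hgsηval : gs (ℓ Z) ζ ζ = ⟪Ts (ℓ Z) ζ, ζ⟫ := hgsTs (ℓ Z) hη ζ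
    have hcs := aux_cs (Ts (ℓ Z)) (hTssymm (ℓ Z) hη) (hTspsd (ℓ Z) hη) ζ (T Z Y)
    have hx1 : ⟪Ts (ℓ Z) ζ, T Z Y⟫ = ⟪ζ, Y⟫ := by
      rw [hTssymm (ℓ Z) hη ζ (T Z Y), hTsW, real_inner_comm]
    have hx2 : ⟪Ts (ℓ Z) (T Z Y), T Z Y⟫ = ⟪T Z Y, Y⟫ := by
      rw [hTsW]
      exact real_inner_comm (T Z Y) Y
    rw [hx1, hx2] at hcs
    have h1pos : 0 < ⟪ζ, Y⟫ := by
      rw [← hgXval]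
      exact hgpos X hX Y hY
    have h2pos : 0 < ⟪T Z Y, Y⟫ := by
      rw [← hgZval]
      exact hgpos Z hZ Y hY
    have h3pos : 0 < ⟪Ts (ℓ Z) ζ, ζ⟫ := by
      rw [← hgsηval]
      exact hgspos (ℓ Z) hη ζ hζ
    have hstep : g X Y Y / g Z Y Y ≤ gs (ℓ Z) ζ ζ / gs (ℓ X) ζ ζ := by
      rw [hgXval, hgZval, hgsξval, hgsηval]
      rw [div_le_div_iff₀ h2pos h1pos]
      nlinarith [hcs]
    exact le_trans hstep (le_csSup hbddstar ⟨ℓ Z, ℓ X, ζ, hη, hξ, hζ, rfl⟩)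
  obtain ⟨e0, he0⟩ := exists_ne (0 : E)
  have hSne : S.Nonempty := ⟨g e0 e0 e0 / g e0 e0 e0, e0, e0, e0, he0, he0, he0, rfl⟩
  have hSstarne : Sstar.Nonempty :=
    ⟨gs e0 e0 e0 / gs e0 e0 e0, e0, e0, e0, he0, he0, he0, rfl⟩
  exact le_antisymm (csSup_le hSstarne hA) (csSup_le hSne hB)

/-- **The dual uniformity constant equals the uniformity constant** (Step 1 in the proof of
Theorem 3.4).  `F` is a Minkowski norm on `ℝⁿ` with positive definite fundamental form `g`,
`Fs` its dual norm with fundamental form `gs`, and the uniformity constant of `F`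
(the supremum of `g_X(Y,Y)/g_Z(Y,Y)`) is finite (i.e. the set of ratios is bounded above).
Then `Λ_{F*} = Λ_F`. -/
theorem stmt_1 (n : ℕ) (hn : 1 ≤ n)
    (F : EuclideanSpace ℝ (Fin n) → ℝ)
    (hFcont : Continuous F)
    (hFpos : ∀ y : EuclideanSpace ℝ (Fin n), y ≠ 0 → 0 < F y)
    (hFhom : ∀ s : ℝ, 0 ≤ s → ∀ y : EuclideanSpace ℝ (Fin n), F (s • y) = s * F y)
    (hFsmooth : ContDiffOn ℝ 2 (fun y => (F y) ^ 2) {(0 : EuclideanSpace ℝ (Fin n))}ᶜ)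
    (g : EuclideanSpace ℝ (Fin n) → EuclideanSpace ℝ (Fin n) → EuclideanSpace ℝ (Fin n) → ℝ)
    (hg : ∀ z, z ≠ 0 → ∀ v w : EuclideanSpace ℝ (Fin n),
      g z v w = (1 / 2) * fderiv ℝ (fun y => fderiv ℝ (fun y' => (F y') ^ 2) y v) z w)
    (hgpos : ∀ z, z ≠ 0 → ∀ v : EuclideanSpace ℝ (Fin n), v ≠ 0 → 0 < g z v v)
    (Fs : EuclideanSpace ℝ (Fin n) → ℝ)
    (hFs : ∀ ξ : EuclideanSpace ℝ (Fin n),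
      Fs ξ = ⨆ y : {y : EuclideanSpace ℝ (Fin n) // y ≠ 0}, ⟪ξ, (y : EuclideanSpace ℝ (Fin n))⟫ / F y)
    (hFssmooth : ContDiffOn ℝ 2 (fun ξ => (Fs ξ) ^ 2) {(0 : EuclideanSpace ℝ (Fin n))}ᶜ)
    (gs : EuclideanSpace ℝ (Fin n) → EuclideanSpace ℝ (Fin n) → EuclideanSpace ℝ (Fin n) → ℝ)
    (hgs : ∀ η, η ≠ 0 → ∀ v w : EuclideanSpace ℝ (Fin n),
      gs η v w = (1 / 2) * fderiv ℝ (fun ξ => fderiv ℝ (fun ξ' => (Fs ξ') ^ 2) ξ v) η w)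
    (hgspos : ∀ η, η ≠ 0 → ∀ ζ : EuclideanSpace ℝ (Fin n), ζ ≠ 0 → 0 < gs η ζ ζ)
    (hbdd : BddAbove {r : ℝ | ∃ X Y Z : EuclideanSpace ℝ (Fin n),
      X ≠ 0 ∧ Y ≠ 0 ∧ Z ≠ 0 ∧ r = g X Y Y / g Z Y Y}) :
    sSup {r : ℝ | ∃ ξ η ζ : EuclideanSpace ℝ (Fin n),
        ξ ≠ 0 ∧ η ≠ 0 ∧ ζ ≠ 0 ∧ r = gs ξ ζ ζ / gs η ζ ζ} =
      sSup {r : ℝ | ∃ X Y Z : EuclideanSpace ℝ (Fin n),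
        X ≠ 0 ∧ Y ≠ 0 ∧ Z ≠ 0 ∧ r = g X Y Y / g Z Y Y} := by
  haveI : Nontrivial (EuclideanSpace ℝ (Fin n)) := by
    apply Module.nontrivial_of_finrank_pos (R := ℝ)
    rw [finrank_euclideanSpace_fin]
    exact hn
  exact aux_main F hFcont hFpos hFhom hFsmooth g hg hgpos Fs hFs hFssmooth gs hgs hgspos hbdd
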